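/- Let π : Q̃ → Q be a minimal gradable covering of a connected locally finite quiver Q, where Q̃ is a connected component of Q^ℤ and π sends (a, n) to a. If x ∈ Q̃^m and y ∈ Q̃^n satisfy π(x) = π(y), then n ≡ m (mod r_Q), where r_Q is the grading period of Q. -/

import Mathlib

universe u v

/-- A walk in a quiver: a sequence of forward or backward traversals of arrows. -/
inductive QWalk {V : Type u} [Quiver.{v} V] : V → V → Type (max u v) where
  | nil {a : V} : QWalk a a
  | fwd {a b c : V} (w : QWalk a b) (e : b ⟶ c) : QWalk a c
  | bwd {a b c : V} (w : QWalk a b) (e : c ⟶ b) : QWalk a c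

namespace QWalk

/-- The degree of a walk: forward arrows count +1, backward arrows count -1. -/
def degree {V : Type u} [Quiver.{v} V] : {a b : V} → QWalk a b → ℤ
  | _, _, nil => 0
  | _, _, fwd w _ => degree w + 1
  | _, _, bwd w _ => degree w - 1

end QWalk

/-- A quiver is gradable if any two walks between the same pair of vertices
have the same degree. -/
def QuiverGradable (V : Type u) [Quiver.{v} V] : Prop :=
  ∀ ⦃a b : V⦄ (w w' : QWalk a b), w.degree = w'.degree

/-- A quiver is locally finite if there are only finitely many arrows between
any two vertices and each vertex has finitely many neighbours. -/
def LocallyFiniteQuiver (V : Type u) [Quiver.{v} V] : Prop :=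
  (∀ a b : V, Finite (a ⟶ b)) ∧
    ∀ a : V, {b : V | Nonempty (a ⟶ b) ∨ Nonempty (b ⟶ a)}.Finite
/-- The quiver `Q^ℤ`: vertices are pairs `(a, i)` with `a` a vertex of `Q` and `i : ℤ`;
arrows `(α, i) : (a, i) → (b, i + 1)` for each arrow `α : a → b` of `Q`. -/
def ZQuiver (V : Type u) [Quiver.{v} V] : Quiver.{v} (V × ℤ) :=
  ⟨fun x y => (x.1 ⟶ y.1) × PLift (y.2 = x.2 + 1)⟩
/-- Two vertices of `Q^ℤ` lie in the same connected component iff there is a walk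
between them. -/
def ZConn (V : Type u) [Quiver.{v} V] (x y : V × ℤ) : Prop :=
  Nonempty (@QWalk (V × ℤ) (ZQuiver V) x y)

/-- `r` is the grading period of the quiver `Q`: it is `0` if `Q` is gradable, and
otherwise it is the minimal positive degree of a closed walk in `Q`. -/
def IsGradingPeriod (V : Type u) [Quiver.{v} V] (r : ℤ) : Prop :=
  (QuiverGradable V ∧ r = 0) ∨
    (¬ QuiverGradable V ∧ 0 < r ∧ (∃ (a : V) (w : QWalk a a), w.degree = r) ∧
      ∀ (a : V) (w : QWalk a a), 0 < w.degree → r ≤ w.degree)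

namespace QWalk

variable {V : Type u} [Quiver.{v} V]

/-- Concatenation of walks. -/
def comp : {a b c : V} → QWalk a b → QWalk b c → QWalk a c
  | _, _, _, w, nil => w
  | _, _, _, w, fwd v e => fwd (comp w v) e
  | _, _, _, w, bwd v e => bwd (comp w v) e

theorem degree_comp {a b c : V} (w : QWalk a b) (v : QWalk b c) :
    (w.comp v).degree = w.degree + v.degree := by
  induction v with
  | nil => simp [comp, degree]
  | fwd v e ih => simp only [comp, degree, ih]; ring
  | bwd v e ih => simp only [comp, degree, ih]; ring

/-- Reversal of walks. -/
def reverse : {a b : V} → QWalk a b → QWalk b a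
  | _, _, nil => nil
  | _, _, fwd w e => comp (bwd nil e) (reverse w)
  | _, _, bwd w e => comp (fwd nil e) (reverse w)

theorem degree_reverse {a b : V} (w : QWalk a b) : w.reverse.degree = -w.degree := by
  induction w with
  | nil => simp [reverse, degree]
  | fwd w e ih => simp only [reverse, degree_comp, degree, ih]; ring
  | bwd w e ih => simp only [reverse, degree_comp, degree, ih]; ring

/-- Natural-number power of a closed walk. -/
def npow {a : V} (w : QWalk a a) : ℕ → QWalk a a
  | 0 => nil
  | n + 1 => (npow w n).comp w

theorem degree_npow {a : V} (w : QWalk a a) (n : ℕ) :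
    (npow w n).degree = n * w.degree := by
  induction n with
  | zero => simp [npow, degree]
  | succ n ih => simp only [npow, degree_comp, ih]; push_cast; ring

theorem exists_deg_mul {a : V} (w : QWalk a a) (k : ℤ) :
    ∃ v : QWalk a a, v.degree = k * w.degree := by
  rcases le_or_gt 0 k with h | h
  · exact ⟨npow w k.toNat, by rw [degree_npow, Int.toNat_of_nonneg h]⟩
  · refine ⟨npow w.reverse (-k).toNat, ?_⟩
    rw [degree_npow, degree_reverse, Int.toNat_of_nonneg (by omega)]; ring

/-- The grading period divides the degree of every closed walk. -/
theorem period_dvd_degree (hconn : ∀ a b : V, Nonempty (QWalk a b)) {r : ℤ}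
    (hr : IsGradingPeriod V r) {a : V} (w : QWalk a a) : r ∣ w.degree := by
  rcases hr with ⟨hg, rfl⟩ | ⟨_, hrpos, ⟨a0, w0, hw0⟩, hmin⟩
  · have : w.degree = (nil : QWalk a a).degree := hg w nil
    simp [this, degree]
  · obtain ⟨p⟩ := hconn a a0
    set wr := p.comp (w0.comp p.reverse) with hwrdef
    have hwr : wr.degree = r := by
      rw [hwrdef, degree_comp, degree_comp, degree_reverse, hw0]; ring
    obtain ⟨v, hv⟩ := exists_deg_mul wr (-(w.degree / r))
    have hd : (w.comp v).degree = w.degree % r := by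
      rw [degree_comp, hv, hwr, Int.emod_def]; ring
    have h0 : 0 ≤ w.degree % r := Int.emod_nonneg _ (by omega)
    have h1 : w.degree % r < r := Int.emod_lt_of_pos _ hrpos
    by_contra hnd
    have hpos : 0 < w.degree % r := by
      rcases lt_or_eq_of_le h0 with h | h
      · exact h
      · exact absurd (Int.dvd_of_emod_eq_zero h.symm) hnd
    have := hmin a (w.comp v) (by rw [hd]; exact hpos)
    omega

end QWalk

section ZWalk

variable {V : Type u} [Quiver.{v} V]

attribute [local instance] ZQuiver

/-- Project a walk in `Q^ℤ` to a walk in `Q`. -/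
def projZ : {x y : V × ℤ} → @QWalk (V × ℤ) (ZQuiver V) x y → QWalk x.1 y.1
  | _, _, .nil => .nil
  | _, _, .fwd w e => .fwd (projZ w) e.1
  | _, _, .bwd w e => .bwd (projZ w) e.1

theorem degree_projZ : {x y : V × ℤ} → (w : @QWalk (V × ℤ) (ZQuiver V) x y) →
    (projZ w).degree = @QWalk.degree (V × ℤ) (ZQuiver V) _ _ w
  | _, _, .nil => by simp [projZ, QWalk.degree]
  | _, _, .fwd w e => by
      simp only [projZ, QWalk.degree, degree_projZ w]
  | _, _, .bwd w e => by
      simp only [projZ, QWalk.degree, degree_projZ w]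

theorem degree_zwalk : {x y : V × ℤ} → (w : @QWalk (V × ℤ) (ZQuiver V) x y) →
    @QWalk.degree (V × ℤ) (ZQuiver V) _ _ w = y.2 - x.2
  | _, _, .nil => by simp [QWalk.degree]
  | _, _, .fwd w e => by
      have h := e.2.down
      simp only [QWalk.degree, degree_zwalk w]; omega
  | _, _, .bwd w e => by
      have h := e.2.down
      simp only [QWalk.degree, degree_zwalk w]; omega

end ZWalk

/-- Let `π : Q̃ → Q` be a minimal gradable covering of a connected
locally finite quiver `Q` (so `Q̃` is a connected component of `Q^ℤ`, graded by
`Q̃^n = Q̃ ∩ (Q_0 × {n})`, and `π(a, n) = a`).  If `x ∈ Q̃^m` and `y ∈ Q̃^n` with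
`π(x) = π(y)`, then `n ≡ m (mod r_Q)`. -/
theorem cover_same_fibre_mod_period (V : Type u) [Quiver.{v} V]
    (hconn : ∀ a b : V, Nonempty (QWalk a b)) (hlf : LocallyFiniteQuiver V)
    {r : ℤ} (hr : IsGradingPeriod V r)
    (x y : V × ℤ) (hxy : ZConn V x y) (hpi : x.1 = y.1) :
    y.2 ≡ x.2 [ZMOD r] := by
  obtain ⟨a, m⟩ := x
  obtain ⟨b, n⟩ := y
  simp only at hpi
  subst hpi
  obtain ⟨wz⟩ := hxy
  have hdeg : (@projZ V _ (a, m) (a, n) wz).degree = n - m := by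
    rw [degree_projZ, degree_zwalk]
  have hdvd := QWalk.period_dvd_degree hconn hr (@projZ V _ (a, m) (a, n) wz)
  rw [hdeg] at hdvd
  have : r ∣ m - n := by
    have := hdvd.neg_right
    rwa [neg_sub] at this
  exact Int.modEq_iff_dvd.mpr this
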